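/- Let d ∈ Z and h ∈ Z_{≥0}. There exists a polynomial f(x) ∈ Q(q)[x] such that for all integers m, f([m]_q) = [m+d choose h]_q, and f([n]_q) ∈ Z[q,q^{-1}] for all integers n. (That is, the shifted Gaussian binomial coefficient [m+d choose h]_q is the evaluation at [m]_q of a quantum integer-valued polynomial.) -/

import Mathlib

open Polynomial Finset

noncomputable section

/-- The q-integer `[n]_q = (q^n - 1)/(q - 1)` for `n ∈ ℤ`, in the field of
rational functions `ℚ(q)`. -/
def qInt (n : ℤ) : RatFunc ℚ := (RatFunc.X ^ n - 1) / (RatFunc.X - 1)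

/-- An element of `ℚ(q)` lies in `ℤ[q, q⁻¹]` if it becomes an integer polynomial
after multiplying by a sufficiently large power of `q`. -/
def IsLaurentInt (z : RatFunc ℚ) : Prop :=
  ∃ (p : Polynomial ℤ) (k : ℕ),
    RatFunc.X ^ k * z = algebraMap (Polynomial ℚ) (RatFunc ℚ) (p.map (Int.castRingHom ℚ))

/-- The polynomial `gbinom(x, k) = x(x-[1]_q)⋯(x-[k-1]_q) / (q^{C(k,2)} [k]_q!)`,
whose value at `x = [n]_q` is the Gaussian binomial coefficient `[n choose k]_q`. -/
def gbinomPoly (k : ℕ) : Polynomial (RatFunc ℚ) :=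
  Polynomial.C ((RatFunc.X ^ (k.choose 2) * ∏ i ∈ Finset.range k, qInt ((i : ℤ) + 1))⁻¹) *
    ∏ i ∈ Finset.range k, (Polynomial.X - Polynomial.C (qInt (i : ℤ)))

namespace QIVPAux

lemma X_ne : (RatFunc.X : RatFunc ℚ) ≠ 0 := RatFunc.X_ne_zero

lemma X_pow_nat_ne_one (m : ℕ) (hm : m ≠ 0) : (RatFunc.X : RatFunc ℚ) ^ m ≠ 1 := by
  intro h
  have h2 : algebraMap (Polynomial ℚ) (RatFunc ℚ) (Polynomial.X ^ m) =
      algebraMap (Polynomial ℚ) (RatFunc ℚ) 1 := by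
    simpa [map_pow, RatFunc.algebraMap_X] using h
  have h3 : (Polynomial.X : Polynomial ℚ) ^ m = 1 := RatFunc.algebraMap_injective ℚ h2
  have := congrArg Polynomial.natDegree h3
  simp [Polynomial.natDegree_X_pow] at this
  exact hm this

lemma zpow_sub_one_ne (n : ℤ) (hn : n ≠ 0) : (RatFunc.X : RatFunc ℚ) ^ n - 1 ≠ 0 := by
  rw [sub_ne_zero]
  rcases lt_or_gt_of_ne hn with h | h
  · intro hX
    have h1 : (RatFunc.X : RatFunc ℚ) ^ (-n) = 1 := by
      rw [zpow_neg, hX, inv_one]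
    have h2 : (RatFunc.X : RatFunc ℚ) ^ ((-n).toNat) = 1 := by
      rw [← h1, ← zpow_natCast]
      congr 1
      omega
    exact X_pow_nat_ne_one _ (by omega) h2
  · intro hX
    have h2 : (RatFunc.X : RatFunc ℚ) ^ (n.toNat) = 1 := by
      rw [← hX, ← zpow_natCast]
      congr 1
      omega
    exact X_pow_nat_ne_one _ (by omega) h2

lemma Xm1_ne : (RatFunc.X : RatFunc ℚ) - 1 ≠ 0 := by
  have := zpow_sub_one_ne 1 one_ne_zero
  simpa using this

/-- Numerator `∏_{i<k} (X^{n-i} - 1)`. -/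
def Nm (n : ℤ) (k : ℕ) : RatFunc ℚ := ∏ i ∈ range k, ((RatFunc.X : RatFunc ℚ) ^ (n - i) - 1)

/-- Denominator `∏_{i<k} (X^{i+1} - 1)`. -/
def Dn (k : ℕ) : RatFunc ℚ := ∏ i ∈ range k, ((RatFunc.X : RatFunc ℚ) ^ ((i : ℤ) + 1) - 1)

/-- The Gaussian binomial `[n choose k]_q` as a rational function. -/
def P (n : ℤ) (k : ℕ) : RatFunc ℚ := Nm n k / Dn k

lemma Dn_ne (k : ℕ) : Dn k ≠ 0 := by
  refine prod_ne_zero_iff.2 fun i _ => zpow_sub_one_ne _ (by omega)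

lemma Nm_succ_left (n : ℤ) (k : ℕ) :
    Nm n (k + 1) = ((RatFunc.X : RatFunc ℚ) ^ n - 1) * Nm (n - 1) k := by
  rw [Nm, prod_range_succ', mul_comm]
  congr 1
  · push_cast
    ring_nf
  · refine prod_congr rfl fun i _ => ?_
    congr 2
    push_cast
    ring

lemma Nm_succ_right (n : ℤ) (k : ℕ) :
    Nm n (k + 1) = Nm n k * ((RatFunc.X : RatFunc ℚ) ^ (n - k) - 1) :=
  prod_range_succ _ _

lemma Dn_succ (k : ℕ) :
    Dn (k + 1) = Dn k * ((RatFunc.X : RatFunc ℚ) ^ ((k : ℤ) + 1) - 1) :=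
  prod_range_succ _ _

lemma P_zero_right (n : ℤ) : P n 0 = 1 := by simp [P, Nm, Dn]

lemma P_zero_left (k : ℕ) : P 0 (k + 1) = 0 := by
  have h : Nm 0 (k + 1) = 0 := by
    refine prod_eq_zero (mem_range.2 (Nat.succ_pos k)) ?_
    norm_num
  simp [P, h]

lemma P_rec (n : ℤ) (k : ℕ) :
    P n (k + 1) = (RatFunc.X : RatFunc ℚ) ^ ((k : ℤ) + 1) * P (n - 1) (k + 1) + P (n - 1) k := by
  have hx : (RatFunc.X : RatFunc ℚ) ^ ((k : ℤ) + 1) * (RatFunc.X : RatFunc ℚ) ^ (n - 1 - k)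
      = (RatFunc.X : RatFunc ℚ) ^ n := by
    rw [← zpow_add₀ X_ne]
    congr 1
    ring
  have key : (RatFunc.X : RatFunc ℚ) ^ n - 1 =
      (RatFunc.X : RatFunc ℚ) ^ ((k : ℤ) + 1) * ((RatFunc.X : RatFunc ℚ) ^ (n - 1 - k) - 1)
        + ((RatFunc.X : RatFunc ℚ) ^ ((k : ℤ) + 1) - 1) := by
    linear_combination -hx
  rw [P, P, P, Nm_succ_left, Dn_succ, Nm_succ_right, key]
  have h1 := Dn_ne k
  have h2 := zpow_sub_one_ne ((k : ℤ) + 1) (by omega)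
  field_simp

lemma LI_one : IsLaurentInt 1 := ⟨1, 0, by simp⟩

lemma LI_zero : IsLaurentInt 0 := ⟨0, 0, by simp⟩

lemma LI_add {z w : RatFunc ℚ} (hz : IsLaurentInt z) (hw : IsLaurentInt w) :
    IsLaurentInt (z + w) := by
  obtain ⟨p, k, hp⟩ := hz
  obtain ⟨r, j, hr⟩ := hw
  refine ⟨Polynomial.X ^ j * p + Polynomial.X ^ k * r, k + j, ?_⟩
  simp only [Polynomial.map_add, Polynomial.map_mul, Polynomial.map_pow, Polynomial.map_X,
    map_add, map_mul, map_pow, RatFunc.algebraMap_X, ← hp, ← hr]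
  ring

lemma LI_mul {z w : RatFunc ℚ} (hz : IsLaurentInt z) (hw : IsLaurentInt w) :
    IsLaurentInt (z * w) := by
  obtain ⟨p, k, hp⟩ := hz
  obtain ⟨r, j, hr⟩ := hw
  refine ⟨p * r, k + j, ?_⟩
  simp only [Polynomial.map_mul, map_mul, ← hp, ← hr]
  ring

lemma LI_intCast (m : ℤ) : IsLaurentInt ((m : ℤ) : RatFunc ℚ) := by
  refine ⟨(m : Polynomial ℤ), 0, ?_⟩
  simp [Polynomial.map_intCast]

lemma LI_zpow (d : ℤ) : IsLaurentInt ((RatFunc.X : RatFunc ℚ) ^ d) := by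
  set j : ℕ := (-d).toNat with hj
  have hjd : 0 ≤ (j : ℤ) + d := by
    have := Int.self_le_toNat (-d)
    omega
  set t : ℕ := ((j : ℤ) + d).toNat with ht
  have htt : ((j : ℤ) + d) = (t : ℤ) := by omega
  refine ⟨Polynomial.X ^ t, j, ?_⟩
  have : (RatFunc.X : RatFunc ℚ) ^ j * (RatFunc.X : RatFunc ℚ) ^ d
      = (RatFunc.X : RatFunc ℚ) ^ t := by
    rw [← zpow_natCast (RatFunc.X : RatFunc ℚ) j, ← zpow_add₀ X_ne, htt, zpow_natCast]
  rw [this]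
  simp [Polynomial.map_pow, map_pow, RatFunc.algebraMap_X]

lemma LI_prod {s : Finset ℕ} {f : ℕ → RatFunc ℚ} (h : ∀ i ∈ s, IsLaurentInt (f i)) :
    IsLaurentInt (∏ i ∈ s, f i) :=
  Finset.prod_induction f IsLaurentInt (fun _ _ => LI_mul) LI_one h

lemma P_int_nat : ∀ n : ℕ, ∀ k : ℕ, IsLaurentInt (P n k) := by
  intro n
  induction n with
  | zero =>
    intro k
    cases k with
    | zero => rw [P_zero_right]; exact LI_one
    | succ k =>
      rw [Nat.cast_zero, P_zero_left]
      exact LI_zero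
  | succ n ih =>
    intro k
    cases k with
    | zero => rw [P_zero_right]; exact LI_one
    | succ k =>
      push_cast
      rw [P_rec]
      simp only [add_sub_cancel_right]
      exact LI_add (LI_mul (LI_zpow _) (ih _)) (ih _)

lemma Nm_reflect (n : ℤ) (k : ℕ) :
    Nm n k = (-1 : RatFunc ℚ) ^ k * (∏ i ∈ range k, (RatFunc.X : RatFunc ℚ) ^ (n - i)) *
      Nm ((k : ℤ) - 1 - n) k := by
  have hterm : ∀ i : ℕ, (RatFunc.X : RatFunc ℚ) ^ (n - i) - 1 =
      (-1) * (RatFunc.X : RatFunc ℚ) ^ (n - i) * ((RatFunc.X : RatFunc ℚ) ^ ((i : ℤ) - n) - 1) := by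
    intro i
    have hx : (RatFunc.X : RatFunc ℚ) ^ ((i : ℤ) - n) * (RatFunc.X : RatFunc ℚ) ^ (n - i)
        = 1 := by
      rw [← zpow_add₀ X_ne]
      norm_num
    linear_combination hx
  have hrefl : Nm ((k : ℤ) - 1 - n) k =
      ∏ i ∈ range k, ((RatFunc.X : RatFunc ℚ) ^ ((i : ℤ) - n) - 1) := by
    rw [Nm, ← prod_range_reflect (fun i => (RatFunc.X : RatFunc ℚ) ^ ((i : ℤ) - n) - 1) k]
    refine prod_congr rfl fun i hi => ?_
    have hik : i < k := mem_range.1 hi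
    congr 2
    have : ((k - 1 - i : ℕ) : ℤ) = (k : ℤ) - 1 - i := by omega
    rw [this]
    ring
  rw [Nm, hrefl]
  calc ∏ i ∈ range k, ((RatFunc.X : RatFunc ℚ) ^ (n - i) - 1)
      = ∏ i ∈ range k, ((-1) * (RatFunc.X : RatFunc ℚ) ^ (n - i) *
          ((RatFunc.X : RatFunc ℚ) ^ ((i : ℤ) - n) - 1)) := prod_congr rfl fun i _ => hterm i
    _ = _ := by
        rw [prod_mul_distrib, prod_mul_distrib, prod_const, card_range]

lemma P_int (n : ℤ) (k : ℕ) : IsLaurentInt (P n k) := by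
  rcases le_or_gt 0 n with hn | hn
  · have h : n = ((n.toNat : ℕ) : ℤ) := by omega
    rw [h]
    exact P_int_nat _ _
  · have hP : P n k = (-1 : RatFunc ℚ) ^ k *
        (∏ i ∈ range k, (RatFunc.X : RatFunc ℚ) ^ (n - i)) * P ((k : ℤ) - 1 - n) k := by
      rw [P, P, Nm_reflect]
      ring
    rw [hP]
    have h1 : IsLaurentInt (P ((k : ℤ) - 1 - n) k) := by
      have h : (k : ℤ) - 1 - n = (((((k : ℤ) - 1 - n).toNat) : ℕ) : ℤ) := by omega
      rw [h]
      exact P_int_nat _ _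
    refine LI_mul (LI_mul ?_ (LI_prod fun i _ => LI_zpow _)) h1
    have : ((-1 : RatFunc ℚ)) ^ k = (((-1) ^ k : ℤ) : RatFunc ℚ) := by push_cast; ring
    rw [this]
    exact LI_intCast _

lemma qInt_sub (n : ℤ) (i : ℕ) : qInt n - qInt i =
    ((RatFunc.X : RatFunc ℚ) ^ (i : ℤ) * ((RatFunc.X : RatFunc ℚ) ^ (n - i) - 1)) /
      (RatFunc.X - 1) := by
  rw [qInt, qInt, div_sub_div_same]
  congr 1
  have hx : (RatFunc.X : RatFunc ℚ) ^ (i : ℤ) * (RatFunc.X : RatFunc ℚ) ^ (n - i)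
      = (RatFunc.X : RatFunc ℚ) ^ n := by
    rw [← zpow_add₀ X_ne]
    congr 1
    ring
  linear_combination -hx

lemma eval_gbinom (n : ℤ) (k : ℕ) : (gbinomPoly k).eval (qInt n) = P n k := by
  rw [gbinomPoly, eval_mul, eval_C, eval_prod]
  simp only [eval_sub, eval_X, eval_C]
  have hden : ∏ i ∈ range k, qInt ((i : ℤ) + 1) = Dn k / (RatFunc.X - 1) ^ k := by
    simp only [qInt]
    rw [prod_div_distrib, prod_const, card_range, Dn]
  have hXc : ∏ i ∈ range k, (RatFunc.X : RatFunc ℚ) ^ (i : ℤ)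
      = (RatFunc.X : RatFunc ℚ) ^ (k.choose 2) := by
    have h1 : ∏ i ∈ range k, (RatFunc.X : RatFunc ℚ) ^ (i : ℤ)
        = ∏ i ∈ range k, (RatFunc.X : RatFunc ℚ) ^ (i : ℕ) :=
      prod_congr rfl fun i _ => zpow_natCast _ _
    rw [h1, prod_pow_eq_pow_sum, Finset.sum_range_id, ← Nat.choose_two_right]
  have hnum : ∏ i ∈ range k, (qInt n - qInt i) =
      ((RatFunc.X : RatFunc ℚ) ^ (k.choose 2) * Nm n k) / (RatFunc.X - 1) ^ k := by
    calc ∏ i ∈ range k, (qInt n - qInt i)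
        = ∏ i ∈ range k, ((RatFunc.X : RatFunc ℚ) ^ (i : ℤ) *
            ((RatFunc.X : RatFunc ℚ) ^ (n - i) - 1)) / (RatFunc.X - 1) :=
          prod_congr rfl fun i _ => qInt_sub n i
      _ = _ := by
          rw [prod_div_distrib, prod_mul_distrib, prod_const, card_range, hXc, Nm]
  rw [hden, hnum, P]
  have h1 : (RatFunc.X : RatFunc ℚ) ^ (k.choose 2) ≠ 0 := pow_ne_zero _ X_ne
  have h2 := Dn_ne k
  have h3 : ((RatFunc.X : RatFunc ℚ) - 1) ^ k ≠ 0 := pow_ne_zero _ Xm1_ne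
  field_simp

lemma qInt_add (m d : ℤ) : qInt (m + d) = (RatFunc.X : RatFunc ℚ) ^ d * qInt m + qInt d := by
  rw [qInt, qInt, qInt, ← mul_div_assoc, ← add_div]
  congr 1
  have hx : (RatFunc.X : RatFunc ℚ) ^ d * (RatFunc.X : RatFunc ℚ) ^ m
      = (RatFunc.X : RatFunc ℚ) ^ (m + d) := by
    rw [← zpow_add₀ X_ne]
    congr 1
    ring
  linear_combination -hx

end QIVPAux

open QIVPAux in
/-- For `d ∈ ℤ` and `h ∈ ℕ`, there is a quantum integer-valued polynomial `f`
with `f([m]_q) = [m+d choose h]_q` for all integers `m`. -/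
theorem shifted_gaussBinomial_is_qivp (d : ℤ) (h : ℕ) :
    ∃ f : Polynomial (RatFunc ℚ),
      (∀ m : ℤ, f.eval (qInt m) = (gbinomPoly h).eval (qInt (m + d))) ∧
      (∀ n : ℤ, IsLaurentInt (f.eval (qInt n))) := by
  set f : Polynomial (RatFunc ℚ) :=
    (gbinomPoly h).comp (Polynomial.C ((RatFunc.X : RatFunc ℚ) ^ d) * Polynomial.X +
      Polynomial.C (qInt d)) with hf
  have h1 : ∀ m : ℤ, f.eval (qInt m) = (gbinomPoly h).eval (qInt (m + d)) := by
    intro m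
    rw [hf, eval_comp]
    simp only [eval_add, eval_mul, eval_C, eval_X]
    rw [qInt_add m d]
  refine ⟨f, h1, fun n => ?_⟩
  rw [h1 n, eval_gbinom]
  exact P_int _ _
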